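/- Fix integers z, k, k', p with 2 ≤ k ≤ k' ≤ p, p prime. Any (z,k,k',p)-agnostic concatenation procedure boosts the size by at most 4kz/k'. Concretely: let α₁,...,α_z ∈ Z/pZ be nonzero, let V ⊆ (Z/pZ)^ℓ be a [0,k-1]-covering family all of whose vectors have every coordinate in {0,1,...,2k-1} (mod p), let S' ⊆ Z/pZ \ {0} with |S'| = k', and let V' be any S'-covering subset of W := {(α₁v₁,...,α_z v_z) : v₁,...,v_z ∈ V}. Then |V'| ≤ |V|^{4kz/k'}. -/

import Mathlib

/-- Agnostic concatenation procedures boost the size by at most `4kz/k'`: if `V` is a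
`[0,k-1]`-covering family with all coordinates in `{0,…,2k-1}`, `S' ⊆ ZMod p \ {0}` has
size `k'`, and `V'` is an `S'`-covering subset of
`W = {(α₁v₁,…,α_z v_z) : vⱼ ∈ V}`, then `|V'| ≤ |V|^(4kz/k')`. -/
theorem stmt17 (p k k' z ℓ : ℕ) (hp : p.Prime) (hk : 2 ≤ k) (hkk' : k ≤ k') (hk'p : k' ≤ p)
    (α : Fin z → ZMod p) (hα : ∀ j, α j ≠ 0)
    (V : Finset (Fin ℓ → ZMod p))
    (hrange : ∀ v ∈ V, ∀ i, ∃ n : ℕ, n < 2 * k ∧ v i = (n : ZMod p))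
    (hVcov : ∀ v ∈ V, ∀ w ∈ V, v ≠ w → ∀ t : ℕ, t ≤ k - 1 → ∃ i, v i - w i = (t : ZMod p))
    (S' : Finset (ZMod p)) (hS0 : (0 : ZMod p) ∉ S') (hS'card : S'.card = k')
    (V' : Finset (Fin z × Fin ℓ → ZMod p))
    (hV'W : ∀ u ∈ V', ∀ j : Fin z, ∃ v ∈ V, ∀ i, u (j, i) = α j * v i)
    (hV'cov : ∀ u ∈ V', ∀ u' ∈ V', u ≠ u' → ∀ t ∈ S', ∃ q, u q - u' q = t) :
    (V'.card : ℝ) ≤ (V.card : ℝ) ^ ((4 * k * z : ℝ) / (k' : ℝ)) := by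
  classical
  haveI : Fact p.Prime := ⟨hp⟩
  set Dset : Finset ℤ := Finset.Ico (-(2 * (k : ℤ)) + 1) (2 * (k : ℤ)) with hD
  set Sj : Fin z → Finset (ZMod p) := fun j => Dset.image (fun d => α j * ((d : ℤ) : ZMod p)) with hSj
  have hmem : ∀ j, ∀ v ∈ V, ∀ w ∈ V, ∀ i, α j * (v i - w i) ∈ Sj j := by
    intro j v hv w hw i
    obtain ⟨n, hn, hvn⟩ := hrange v hv i
    obtain ⟨m, hm, hwm⟩ := hrange w hw i
    refine Finset.mem_image.2 ⟨(n : ℤ) - m, ?_, ?_⟩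
    · rw [hD, Finset.mem_Ico]; omega
    · rw [hvn, hwm]; push_cast; ring
  have hSjcard : ∀ j, (Sj j).card ≤ 4 * k - 1 := by
    intro j
    calc (Sj j).card ≤ Dset.card := Finset.card_image_le
      _ = 4 * k - 1 := by rw [hD, Int.card_Ico]; omega
  have hS'ne : S'.Nonempty := by
    rw [← Finset.card_pos, hS'card]; omega
  set f : ZMod p → ℕ := fun g => (Finset.univ.filter (fun j => g ∈ Sj j)).card with hf
  obtain ⟨g, hgS', hgmin⟩ := S'.exists_min_image f hS'ne
  have hsum : ∑ g' ∈ S', f g' ≤ z * (4 * k - 1) := by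
    have heq : ∑ g' ∈ S', f g' = ∑ j : Fin z, (S'.filter (fun g' => g' ∈ Sj j)).card := by
      simp only [hf, Finset.card_filter]
      rw [Finset.sum_comm]
    rw [heq]
    calc ∑ j : Fin z, (S'.filter (fun g' => g' ∈ Sj j)).card
        ≤ ∑ _j : Fin z, (4 * k - 1) := by
          refine Finset.sum_le_sum fun j _ => ?_
          refine le_trans (Finset.card_le_card fun x hx => (Finset.mem_filter.1 hx).2) (hSjcard j)
      _ = z * (4 * k - 1) := by simp [Finset.card_univ, mul_comm]
  have hk'pos : 0 < k' := by omega
  have hTk : k' * f g ≤ 4 * k * z := by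
    have h1 : S'.card • f g ≤ ∑ g' ∈ S', f g' := Finset.card_nsmul_le_sum S' f (f g) hgmin
    rw [hS'card, smul_eq_mul] at h1
    calc k' * f g ≤ z * (4 * k - 1) := le_trans h1 hsum
      _ ≤ z * (4 * k) := Nat.mul_le_mul_left z (by omega)
      _ = 4 * k * z := by ring
  set T : Finset (Fin z) := Finset.univ.filter (fun j => g ∈ Sj j) with hT
  have hTcard : T.card = f g := rfl
  have hcard : V'.card ≤ V.card ^ T.card := by
    have hinj := Finset.card_le_card_of_injOn
      (f := fun (u : Fin z × Fin ℓ → ZMod p) => fun j (_ : j ∈ T) => fun i => (α j)⁻¹ * u (j, i))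
      (s := V') (t := T.pi (fun _ => V)) ?_ ?_
    · rwa [Finset.card_pi, Finset.prod_const] at hinj
    · intro u hu
      rw [Finset.mem_coe, Finset.mem_pi]
      intro j _
      obtain ⟨v, hv, hvi⟩ := hV'W u hu j
      have : (fun i => (α j)⁻¹ * u (j, i)) = v := by
        funext i
        rw [hvi i, inv_mul_cancel_left₀ (hα j)]
      show (fun i => (α j)⁻¹ * u (j, i)) ∈ V
      rw [this]; exact hv
    · intro u hu u' hu' heq
      by_contra hne
      obtain ⟨q, hq⟩ := hV'cov u hu u' hu' hne g hgS'
      obtain ⟨j, i⟩ := q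
      have hjT : j ∈ T := by
        obtain ⟨v, hv, hvi⟩ := hV'W u hu j
        obtain ⟨w, hw, hwi⟩ := hV'W u' hu' j
        rw [hT, Finset.mem_filter]
        refine ⟨Finset.mem_univ _, ?_⟩
        have : α j * (v i - w i) = g := by
          rw [mul_sub, ← hvi i, ← hwi i]; exact hq
        rw [← this]; exact hmem j v hv w hw i
      have h2 := congrFun (congrFun (congrFun heq j) hjT) i
      simp only at h2
      have h3 : u (j, i) = u' (j, i) := mul_left_cancel₀ (inv_ne_zero (hα j)) h2
      rw [h3, sub_self] at hq
      exact hS0 (hq ▸ hgS')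
  by_cases hV : V.card = 0
  · by_cases hz : z = 0
    · subst hz
      have hT0 : T.card = 0 := by
        rw [Finset.card_eq_zero]
        exact Finset.eq_empty_of_forall_notMem fun j _ => j.elim0
      have : V'.card ≤ 1 := by
        have := hcard; rwa [hT0, pow_zero] at this
      have hexp : (4 * (k : ℝ) * (0 : ℕ)) / (k' : ℝ) = 0 := by simp
      rw [show ((4 * k * (0:ℕ) : ℝ)) = (0:ℝ) by push_cast; ring, zero_div, Real.rpow_zero]
      exact_mod_cast this
    · have hV'e : V' = ∅ := by
        rw [Finset.card_eq_zero] at hV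
        by_contra h
        obtain ⟨u, hu⟩ := Finset.nonempty_of_ne_empty h
        obtain ⟨v, hv, _⟩ := hV'W u hu ⟨0, Nat.pos_of_ne_zero hz⟩
        simp [hV] at hv
      rw [hV'e]
      simp only [Finset.card_empty, Nat.cast_zero]
      positivity
  · have h1 : (1 : ℝ) ≤ (V.card : ℝ) := by
      exact_mod_cast Nat.one_le_iff_ne_zero.2 hV
    have hexp : (T.card : ℝ) ≤ (4 * k * z : ℝ) / (k' : ℝ) := by
      rw [le_div_iff₀ (by exact_mod_cast hk'pos)]
      have : (k' * f g : ℝ) ≤ (4 * k * z : ℝ) := by exact_mod_cast hTk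
      rw [hTcard]; push_cast at this ⊢; linarith
    calc (V'.card : ℝ) ≤ ((V.card : ℝ)) ^ (T.card : ℕ) := by exact_mod_cast hcard
      _ = (V.card : ℝ) ^ ((T.card : ℕ) : ℝ) := (Real.rpow_natCast _ _).symm
      _ ≤ (V.card : ℝ) ^ ((4 * k * z : ℝ) / (k' : ℝ)) :=
        Real.rpow_le_rpow_of_exponent_le h1 hexp
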